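/- The set of functions of the form c + g - g∘T with c ∈ ℝ and g ∈ L^∞ is dense in L¹(μ), when T is an ergodic measure-preserving automorphism of the probability space (Ω, A, μ). -/

import Mathlib

open MeasureTheory Filter Function
open scoped ENNReal Topology RealInnerProductSpace

section aux

variable {Ω : Type*} [MeasurableSpace Ω] {μ : Measure Ω} [IsProbabilityMeasure μ]
  {T : Ω → Ω}

local instance : Fact ((1:ℝ≥0∞) ≤ 2) := ⟨one_le_two⟩

/-- coeFn of a finset sum in Lp -/
lemma lp_coeFn_sum {ι : Type*} (s : Finset ι) (F : ι → Lp ℝ 2 μ) :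
    ⇑(∑ i ∈ s, F i) =ᵐ[μ] fun ω => ∑ i ∈ s, F i ω := by
  classical
  induction s using Finset.induction_on with
  | empty =>
    simp only [Finset.sum_empty]
    exact Lp.coeFn_zero (E := ℝ) (p := 2) (μ := μ)
  | @insert a s hx ih =>
    rw [Finset.sum_insert hx]
    filter_upwards [Lp.coeFn_add (F _) (∑ i ∈ _, F i), ih] with ω h1 h2
    rw [h1, Pi.add_apply, h2, Finset.sum_insert hx]

lemma iterate_ae (hT : MeasurePreserving T μ μ) {h : Ω → ℝ} (hh : MemLp h 2 μ)
    (k : ℕ) :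
    ⇑((Lp.compMeasurePreservingₗᵢ ℝ T hT (p := 2)).toContinuousLinearMap^[k] (hh.toLp h))
      =ᵐ[μ] fun ω => h (T^[k] ω) := by
  induction k with
  | zero => simpa using hh.coeFn_toLp
  | succ k ih =>
    rw [Function.iterate_succ_apply']
    have h1 := Lp.coeFn_compMeasurePreserving
      ((Lp.compMeasurePreservingₗᵢ ℝ T hT (p := 2)).toContinuousLinearMap^[k] (hh.toLp h)) hT
    have h2 := hT.quasiMeasurePreserving.ae_eq_comp ih
    refine h1.trans (h2.trans ?_)
    filter_upwards with ω
    simp [Function.comp, ← Function.iterate_succ_apply, Function.iterate_succ_apply']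

set_option synthInstance.maxHeartbeats 1000000 in
set_option maxHeartbeats 2000000 in
lemma mean_ergodic_L1 (hT : MeasurePreserving T μ μ) (hTerg : Ergodic T μ)
    {h : Ω → ℝ} (hh : MemLp h 2 μ) (hint : ∫ ω, h ω ∂μ = 0) {δ : ℝ} (hδ : 0 < δ) :
    ∃ N : ℕ, 0 < N ∧ eLpNorm (birkhoffAverage ℝ T h N) 1 μ < ENNReal.ofReal δ := by
  set U : Lp ℝ 2 μ →L[ℝ] Lp ℝ 2 μ :=
    (Lp.compMeasurePreservingₗᵢ ℝ T hT (p := 2)).toContinuousLinearMap with hU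
  have hUnorm : ‖U‖ ≤ 1 := LinearIsometry.norm_toContinuousLinearMap_le _
  set x : Lp ℝ 2 μ := hh.toLp h with hx
  have key := U.tendsto_birkhoffAverage_orthogonalProjection hUnorm x
  -- the projection is zero
  set one : Lp ℝ 2 μ := (memLp_const (1:ℝ)).toLp _ with hone
  have hone_ae : ⇑one =ᵐ[μ] fun _ => (1:ℝ) := MemLp.coeFn_toLp _
  have hinner : ∀ w : Lp ℝ 2 μ, inner ℝ w one = ∫ ω, w ω ∂μ := by
    intro w
    rw [L2.inner_def]
    refine integral_congr_ae ?_
    filter_upwards [hone_ae] with ω hω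
    simp [hω, RCLike.inner_apply]
  have hone_mem : one ∈ U.eqLocus (1 : Lp ℝ 2 μ →L[ℝ] Lp ℝ 2 μ) := by
    show U one = one
    refine Lp.ext ?_
    refine (Lp.coeFn_compMeasurePreserving one hT).trans ?_
    refine (hT.quasiMeasurePreserving.ae_eq_comp hone_ae).trans ?_
    exact Filter.EventuallyEq.refl _ _ |>.trans hone_ae.symm
  have hproj : ((U.eqLocus (1 : Lp ℝ 2 μ →L[ℝ] Lp ℝ 2 μ)).orthogonalProjectionOnto x : Lp ℝ 2 μ) = 0 := by
    set u : Lp ℝ 2 μ := ((U.eqLocus (1 : Lp ℝ 2 μ →L[ℝ] Lp ℝ 2 μ)).orthogonalProjectionOnto x : Lp ℝ 2 μ) with hu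
    have humem : U u = u := ((U.eqLocus (1 : Lp ℝ 2 μ →L[ℝ] Lp ℝ 2 μ)).orthogonalProjectionOnto x).2
    have hu_inv : (⇑u) ∘ T =ᵐ[μ] ⇑u := by
      have h2 : ⇑(U u) =ᵐ[μ] ⇑u ∘ T := Lp.coeFn_compMeasurePreserving u hT
      rw [humem] at h2
      exact h2.symm
    obtain ⟨d, hd⟩ := hTerg.ae_eq_const_of_ae_eq_comp_ae (Lp.aestronglyMeasurable u) hu_inv
    have hx_ae : ⇑x =ᵐ[μ] h := hh.coeFn_toLp
    have hx_int : inner ℝ x one = 0 := by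
      rw [hinner, integral_congr_ae hx_ae, hint]
    have hu_int : inner ℝ u one = d := by
      rw [hinner, integral_congr_ae hd]
      simp
    have horth : inner ℝ (x - u) one = 0 := Submodule.starProjection_inner_eq_zero x one hone_mem
    rw [inner_sub_left, hx_int, hu_int] at horth
    have hd0 : d = 0 := by linarith [horth]
    refine Lp.ext (hd.trans ?_)
    rw [hd0]
    exact (Lp.coeFn_zero ℝ 2 μ).symm.trans (by rfl)
  rw [hproj] at key
  have hnorm : Tendsto (fun n => ‖birkhoffAverage ℝ U _root_.id n x‖) atTop (𝓝 0) := by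
    simpa using key.norm
  have hev : ∀ᶠ n : ℕ in atTop, ‖birkhoffAverage ℝ U _root_.id n x‖ < δ :=
    (hnorm.eventually (eventually_lt_nhds hδ)).mono (by simp)
  obtain ⟨N, hN1, hNδ⟩ := ((eventually_ge_atTop 1).and hev).exists
  refine ⟨N, hN1, ?_⟩
  -- identify the Birkhoff average in Lp with the pointwise one
  have hae : ⇑(birkhoffAverage ℝ U _root_.id N x) =ᵐ[μ] birkhoffAverage ℝ T h N := by
    have hsum : ⇑(birkhoffSum U _root_.id N x) =ᵐ[μ] fun ω => ∑ k ∈ Finset.range N, h (T^[k] ω) := by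
      have h1 : birkhoffSum U _root_.id N x = ∑ k ∈ Finset.range N, U^[k] x := rfl
      rw [h1]
      refine (lp_coeFn_sum _ _).trans ?_
      have H : ∀ᵐ ω ∂μ, ∀ k, (U^[k] x) ω = h (T^[k] ω) := ae_all_iff.2 fun k => iterate_ae hT hh k
      filter_upwards [H] with ω hω
      exact Finset.sum_congr rfl fun k _ => hω k
    refine (Lp.coeFn_smul ((N:ℝ)⁻¹) (birkhoffSum U _root_.id N x)).trans ?_
    filter_upwards [hsum] with ω hω
    simp only [Pi.smul_apply, hω]
    simp [birkhoffAverage, birkhoffSum]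
  calc eLpNorm (birkhoffAverage ℝ T h N) 1 μ
      = eLpNorm (⇑(birkhoffAverage ℝ U _root_.id N x)) 1 μ := (eLpNorm_congr_ae hae).symm
    _ ≤ eLpNorm (⇑(birkhoffAverage ℝ U _root_.id N x)) 2 μ :=
        eLpNorm_le_eLpNorm_of_exponent_le one_le_two (Lp.aestronglyMeasurable _)
    _ = ENNReal.ofReal ‖birkhoffAverage ℝ U _root_.id N x‖ := by
        rw [Lp.norm_def, ENNReal.ofReal_toReal (Lp.eLpNorm_ne_top _)]
    _ < ENNReal.ofReal δ := by exact_mod_cast ENNReal.ofReal_lt_ofReal_iff hδ |>.2 hNδ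

end aux


/-- The set of functions `c + g - g∘T`, `c ∈ ℝ`, `g ∈ L^∞`, is dense in `L¹(μ)` for an ergodic
measure-preserving `T`. -/
theorem stmt7 {Ω : Type*} [MeasurableSpace Ω] (μ : Measure Ω) [IsProbabilityMeasure μ]
    (T : Ω → Ω) (hT : MeasurePreserving T μ μ) (hTerg : Ergodic T μ)
    (f : Ω → ℝ) (hf : Integrable f μ) (ε : ℝ) (hε : 0 < ε) :
    ∃ (c : ℝ) (g : Ω → ℝ), MemLp g ⊤ μ ∧
      eLpNorm (fun ω => f ω - (c + g ω - g (T ω))) 1 μ < ENNReal.ofReal ε := by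
  have hf1 : MemLp f 1 μ := memLp_one_iff_integrable.mpr hf
  obtain ⟨s, hs_close, -⟩ := hf1.exists_simpleFunc_eLpNorm_sub_lt (by simp)
    (ne_of_gt (ENNReal.ofReal_pos.mpr (half_pos hε)))
  set c : ℝ := ∫ ω, s ω ∂μ with hc
  set h : Ω → ℝ := fun ω => s ω - c with hhdef
  have hs_top : MemLp (⇑s) ⊤ μ := s.memLp_top μ
  have hh_top : MemLp h ⊤ μ := hs_top.sub (memLp_const c)
  have hh2 : MemLp h 2 μ := hh_top.mono_exponent le_top
  have hs_int : Integrable (⇑s) μ := memLp_one_iff_integrable.mp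
    (hs_top.mono_exponent le_top)
  have hint : ∫ ω, h ω ∂μ = 0 := by
    simp [hhdef, integral_sub hs_int (integrable_const c), ← hc]
  obtain ⟨N, hN, hNlt⟩ := mean_ergodic_L1 hT hTerg hh2 hint (half_pos hε)
  set g : Ω → ℝ := fun ω => (N:ℝ)⁻¹ • ∑ j ∈ Finset.range N, birkhoffSum T h j ω with hgdef
  have hcomp : ∀ i : ℕ, MemLp (fun ω => h (T^[i] ω)) ⊤ μ :=
    fun i => hh_top.comp_measurePreserving (hT.iterate i)
  have hS : ∀ j : ℕ, MemLp (fun ω => birkhoffSum T h j ω) ⊤ μ := fun j =>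
    memLp_finset_sum (Finset.range j) (fun i _ => hcomp i)
  have hg_top : MemLp g ⊤ μ := by
    have := (memLp_finset_sum (Finset.range N) fun j _ => hS j).const_smul ((N:ℝ)⁻¹)
    exact this
  have hA_top : MemLp (birkhoffAverage ℝ T h N) ⊤ μ := by
    have := (memLp_finset_sum (Finset.range N) fun i _ => hcomp i).const_smul ((N:ℝ)⁻¹)
    exact this
  have hgT : ∀ ω, g ω - g (T ω) = h ω - birkhoffAverage ℝ T h N ω := by
    intro ω
    have hstep : ∀ j : ℕ, birkhoffSum T h j (T ω) = birkhoffSum T h (j+1) ω - h ω := by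
      intro j
      rw [birkhoffSum_succ']
      ring
    have htel : ∑ j ∈ Finset.range N, (birkhoffSum T h (j+1) ω - birkhoffSum T h j ω)
        = birkhoffSum T h N ω - birkhoffSum T h 0 ω := Finset.sum_range_sub (fun j => birkhoffSum T h j ω) N
    have hNne : (N:ℝ) ≠ 0 := Nat.cast_ne_zero.mpr hN.ne'
    simp only [hgdef]
    rw [← smul_sub, ← Finset.sum_sub_distrib]
    have hcongr : ∀ j ∈ Finset.range N, birkhoffSum T h j ω - birkhoffSum T h j (T ω)
        = h ω - (birkhoffSum T h (j+1) ω - birkhoffSum T h j ω) := by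
      intro j _
      rw [hstep]
      ring
    rw [Finset.sum_congr rfl hcongr, Finset.sum_sub_distrib, htel, birkhoffSum_zero,
      Finset.sum_const, Finset.card_range]
    simp only [birkhoffAverage, smul_eq_mul, nsmul_eq_mul, sub_zero]
    field_simp
  have hkey : (fun ω => f ω - (c + g ω - g (T ω)))
      = fun ω => (f ω - s ω) + birkhoffAverage ℝ T h N ω := by
    funext ω
    have h1 := hgT ω
    have h2 : h ω = s ω - c := rfl
    rw [h2] at h1
    linarith [h1]
  refine ⟨c, g, hg_top, ?_⟩
  rw [hkey]
  calc eLpNorm (fun ω => (f ω - s ω) + birkhoffAverage ℝ T h N ω) 1 μ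
      ≤ eLpNorm (fun ω => f ω - s ω) 1 μ + eLpNorm (birkhoffAverage ℝ T h N) 1 μ :=
        eLpNorm_add_le (hf.sub hs_int).aestronglyMeasurable hA_top.aestronglyMeasurable le_rfl
    _ < ENNReal.ofReal (ε/2) + ENNReal.ofReal (ε/2) := ENNReal.add_lt_add hs_close hNlt
    _ = ENNReal.ofReal ε := by
        rw [← ENNReal.ofReal_add (by positivity) (by positivity), add_halves]
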